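/- Let R be a commutative ring with unit, F ⊆ R⟨X⟩, and f ∈ (F) an element of the two-sided ideal generated by F. Let Q = (V, E, X, s, t, l) be a labelled quiver such that f is compatible with Q and all elements of F are uniformly compatible with Q. Then for every R-linear category 𝒞 and every representation (𝒱, φ) of Q in 𝒞 consistent with the labelling such that every realization of every element of F is zero, every realization of f is zero; that is, φ_{v,w}(f) = 0 in Hom_𝒞(𝒱_v, 𝒱_w) for all (v, w) ∈ σ(f). -/

import Mathlib

open scoped BigOperators

/-- The free `R`-algebra `R⟨X⟩` on `X`, as the monoid algebra over `R`
of the free monoid `⟨X⟩` of words over `X`. -/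
abbrev FreeAlg (R X : Type*) [CommRing R] := MonoidAlgebra R (FreeMonoid X)

/-- The monomial in `R⟨X⟩` corresponding to a word `m ∈ ⟨X⟩`. -/
noncomputable def monom (R : Type*) [CommRing R] {X : Type*} (m : FreeMonoid X) : FreeAlg R X :=
  MonoidAlgebra.of R (FreeMonoid X) m

/-- `h` is obtained from `f` by a rewriting step using `g`: some monomial `m_g` in the
support of `g` divides a monomial `a·m_g·b` in the support of `f`, and
`h = f + λ·a·g·b` for some `λ ∈ R`. -/
def RewriteStep {R X : Type*} [CommRing R] (g f h : FreeAlg R X) : Prop :=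
  ∃ (a b mg : FreeMonoid X) (lam : R),
    mg ∈ (g.coeff : FreeMonoid X →₀ R).support ∧
    a * mg * b ∈ (f.coeff : FreeMonoid X →₀ R).support ∧
    h = f + lam • (monom R a * g * monom R b)

/-- `f` can be rewritten to `h` using the set `G`: there is a finite chain of rewriting
steps, each using an element of `G`, leading from `f` to `h`. -/
def RewritesTo {R X : Type*} [CommRing R] (G : Set (FreeAlg R X)) (f h : FreeAlg R X) : Prop :=
  Relation.ReflTransGen (fun p q => ∃ g ∈ G, RewriteStep g p q) f h

/-- Membership in the two-sided ideal `(F)` generated by `F`: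
`f` is a finite sum `Σᵢ aᵢ·fᵢ·bᵢ` with `aᵢ, bᵢ ∈ R⟨X⟩` and `fᵢ ∈ F`. -/
def MemIdeal {R X : Type*} [CommRing R] (F : Set (FreeAlg R X)) (f : FreeAlg R X) : Prop :=
  ∃ (n : ℕ) (a b g : Fin n → FreeAlg R X),
    (∀ i, g i ∈ F) ∧ f = ∑ i, a i * g i * b i

/-- A labelled quiver `Q = (V, E, X, s, t, l)`: a directed multigraph with vertex set `V`,
edge set `E`, source and target maps `s, t : E → V` and labelling `l : E → X`. -/
structure LabelledQuiver (V E X : Type*) where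
  src : E → V
  tgt : E → V
  lab : E → X

/-- Paths in a labelled quiver `Q`; `LQPath Q u w` is the type of paths with source `u` and
target `w`.  `nil v` is the empty path at `v`; `cons e p` appends the edge `e` after `p`. -/
inductive LQPath {V E X : Type*} (Q : LabelledQuiver V E X) : V → V → Type _ where
  | nil (v : V) : LQPath Q v v
  | cons {u : V} (e : E) (p : LQPath Q u (Q.src e)) : LQPath Q u (Q.tgt e)

namespace LQPath
variable {V E X : Type*} {Q : LabelledQuiver V E X}
/-- The label `l(p) = l(eₙ)⋯l(e₁) ∈ ⟨X⟩` of a path; the empty path has label `1`. -/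
def label : {u w : V} → LQPath Q u w → FreeMonoid X
  | _, _, .nil _ => 1
  | _, _, .cons e p => FreeMonoid.of (Q.lab e) * p.label
end LQPath

namespace LabelledQuiver

variable {V E X : Type*} (Q : LabelledQuiver V E X)

/-- The set of signatures `σ(m) = {(s(p), t(p)) : p a path in Q with l(p) = m}`. -/
def sigmaM (m : FreeMonoid X) : Set (V × V) :=
  {vw | ∃ p : LQPath Q vw.1 vw.2, p.label = m}

variable {R : Type*} [CommRing R]

/-- The set of signatures `σ(f) = ⋂_{m ∈ supp(f)} σ(m)` of a polynomial. -/
def sigmaP (f : FreeAlg R X) : Set (V × V) :=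
  ⋂ m ∈ (f.coeff : FreeMonoid X →₀ R).support, Q.sigmaM m

/-- `f` is compatible with `Q` if `σ(f) ≠ ∅`. -/
def Compatible (f : FreeAlg R X) : Prop :=
  (Q.sigmaP f).Nonempty

/-- `f` is uniformly compatible with `Q` if it is compatible and all monomials in its
support have the same set of signatures. -/
def UniformlyCompatible (f : FreeAlg R X) : Prop :=
  Q.Compatible f ∧
    ∀ m ∈ (f.coeff : FreeMonoid X →₀ R).support, ∀ m' ∈ (f.coeff : FreeMonoid X →₀ R).support,
      Q.sigmaM m = Q.sigmaM m'

/-- The set of sources `s(f)` of a polynomial: the projection of `σ(f)` to the first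
component. -/
def srcSet (f : FreeAlg R X) : Set V := Prod.fst '' Q.sigmaP f

/-- The set of targets `t(f)` of a polynomial: the projection of `σ(f)` to the second
component. -/
def tgtSet (f : FreeAlg R X) : Set V := Prod.snd '' Q.sigmaP f

end LabelledQuiver

open CategoryTheory

/-- A representation `(𝒱, φ)` of a labelled quiver `Q` in an `R`-linear category `C`:
a `C`-object `𝒱_v` for each vertex `v` and a morphism `φ(e) ∈ Hom_C(𝒱_{s(e)}, 𝒱_{t(e)})`
for each edge `e`. -/
structure CatQuiverRep (R : Type*) [CommRing R] {V E X : Type*} (Q : LabelledQuiver V E X)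
    (C : Type*) [Category C] [Preadditive C] [CategoryTheory.Linear R C] where
  obj : V → C
  map : (e : E) → (obj (Q.src e) ⟶ obj (Q.tgt e))

namespace CatQuiverRep

variable {R : Type*} [CommRing R] {V E X : Type*} {Q : LabelledQuiver V E X}
  {C : Type*} [Category C] [Preadditive C] [CategoryTheory.Linear R C]

/-- The morphism `φ(eₙ)⋯φ(e₁)` induced by a path; the empty path induces the identity. -/
def pathMap (ρ : CatQuiverRep R Q C) : {u w : V} → LQPath Q u w → (ρ.obj u ⟶ ρ.obj w)
  | _, _, .nil _ => 𝟙 _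
  | _, _, .cons e p => ρ.pathMap p ≫ ρ.map e

/-- A representation is consistent with the labelling if any two paths with the same source,
the same target and the same label induce the same morphism. -/
def Consistent (ρ : CatQuiverRep R Q C) : Prop :=
  ∀ (u w : V) (p q : LQPath Q u w), p.label = q.label → ρ.pathMap p = ρ.pathMap q

/-- The realization `φ_{v,w}(f)` of a polynomial `f` as a morphism in `C`: the `R`-linear
extension of the assignment sending the label of a path from `v` to `w` to the composition of
the morphisms along the path (an arbitrary such path is chosen for each monomial; for a
consistent representation the result does not depend on this choice). -/
noncomputable def realize (ρ : CatQuiverRep R Q C) (v w : V) (f : FreeAlg R X) :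
    ρ.obj v ⟶ ρ.obj w :=
  Finsupp.sum (f.coeff : FreeMonoid X →₀ R) fun m c =>
    letI := Classical.propDecidable (∃ p : LQPath Q v w, p.label = m)
    c • (if h : ∃ p : LQPath Q v w, p.label = m then ρ.pathMap h.choose else 0)

end CatQuiverRep

section Aux

namespace LQPath

variable {V E X : Type*} {Q : LabelledQuiver V E X}

/-- Concatenation of paths. -/
def comp : {u v w : V} → LQPath Q u v → LQPath Q v w → LQPath Q u w
  | _, _, _, p, .nil _ => p
  | _, _, _, p, .cons e q => .cons e (p.comp q)

theorem label_comp : ∀ {u v w : V} (p : LQPath Q u v) (q : LQPath Q v w),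
    (p.comp q).label = q.label * p.label
  | _, _, _, p, .nil _ => by simp [comp, label]
  | _, _, _, p, .cons e q => by simp [comp, label, label_comp p q, mul_assoc]

/-- Splitting a path along a factorization of its label. -/
theorem split {v w : V} (x y : FreeMonoid X) (p : LQPath Q v w) (h : p.label = x * y) :
    ∃ (u : V) (q : LQPath Q v u) (r : LQPath Q u w), q.label = y ∧ r.label = x := by
  induction x using FreeMonoid.recOn generalizing w p with
  | one =>
    exact ⟨w, p, .nil w, by simpa using h, by simp [LQPath.label]⟩
  | of_mul a xs IH =>
    cases p with
    | nil =>
      exfalso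
      have := congrArg FreeMonoid.toList h
      simp [LQPath.label] at this
    | cons e p' =>
      have hcons : FreeMonoid.of (Q.lab e) * p'.label
          = FreeMonoid.of a * (xs * y) := by
        simpa [label, mul_assoc] using h
      have hlist := congrArg FreeMonoid.toList hcons
      simp at hlist
      obtain ⟨hae, hp'⟩ := hlist
      have hp'' : p'.label = xs * y := FreeMonoid.toList.injective (by simpa using hp')
      obtain ⟨u, q, r, hq, hr⟩ := IH p' hp''
      exact ⟨u, q, .cons e r, hq, by simp [label, hr, hae]⟩

end LQPath

namespace CatQuiverRep

variable {R : Type*} [CommRing R] {V E X : Type*} {Q : LabelledQuiver V E X}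
  {C : Type*} [Category C] [Preadditive C] [CategoryTheory.Linear R C]

theorem pathMap_comp (ρ : CatQuiverRep R Q C) :
    ∀ {u v w : V} (p : LQPath Q u v) (q : LQPath Q v w),
    ρ.pathMap (p.comp q) = ρ.pathMap p ≫ ρ.pathMap q
  | _, _, _, p, .nil _ => by simp [LQPath.comp, pathMap]
  | _, _, _, p, .cons e q => by
    simp [LQPath.comp, pathMap, pathMap_comp ρ p q]

/-- The value of the realization on a single monomial. -/
noncomputable def psi (ρ : CatQuiverRep R Q C) (v w : V) (m : FreeMonoid X) :
    ρ.obj v ⟶ ρ.obj w :=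
  letI := Classical.propDecidable (∃ p : LQPath Q v w, p.label = m)
  if h : ∃ p : LQPath Q v w, p.label = m then ρ.pathMap h.choose else 0

theorem psi_eq_pathMap (ρ : CatQuiverRep R Q C) (hρ : ρ.Consistent) {v w : V}
    (p : LQPath Q v w) {m : FreeMonoid X} (hm : p.label = m) :
    ρ.psi v w m = ρ.pathMap p := by
  have hex : ∃ q : LQPath Q v w, q.label = m := ⟨p, hm⟩
  rw [psi]
  rw [dif_pos hex]
  exact hρ _ _ _ _ (hex.choose_spec.trans hm.symm)

theorem psi_eq_zero (ρ : CatQuiverRep R Q C) {v w : V} {m : FreeMonoid X}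
    (h : ¬ ∃ p : LQPath Q v w, p.label = m) : ρ.psi v w m = 0 := by
  rw [psi]
  rw [dif_neg h]

/-- The realization as a linear map. -/
noncomputable def L (ρ : CatQuiverRep R Q C) (v w : V) :
    FreeAlg R X →ₗ[R] (ρ.obj v ⟶ ρ.obj w) :=
  Finsupp.linearCombination R (ρ.psi v w) ∘ₗ (MonoidAlgebra.coeffLinearEquiv R).toLinearMap

theorem realize_eq_sum (ρ : CatQuiverRep R Q C) (v w : V) (f : FreeAlg R X) :
    ρ.realize v w f = Finsupp.sum (f.coeff : FreeMonoid X →₀ R) (fun m c => c • ρ.psi v w m) :=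
  rfl

theorem realize_eq_L (ρ : CatQuiverRep R Q C) (v w : V) (f : FreeAlg R X) :
    ρ.realize v w f = ρ.L v w f := by
  simp only [L, LinearMap.comp_apply, Finsupp.linearCombination_apply]
  rfl

theorem L_single (ρ : CatQuiverRep R Q C) (v w : V) (m : FreeMonoid X) (c : R) :
    ρ.L v w (MonoidAlgebra.single m c) = c • ρ.psi v w m := by
  simp only [L, LinearMap.comp_apply]
  exact Finsupp.linearCombination_single _ _ _

/-- Core lemma: the realization kills `single u c * g * single t d` for `g`
uniformly compatible whose realizations all vanish. -/
theorem L_single_mul_single (ρ : CatQuiverRep R Q C) (hρ : ρ.Consistent)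
    (g : FreeAlg R X) (hg : Q.UniformlyCompatible g)
    (hz : ∀ v w : V, (v, w) ∈ Q.sigmaP g → ρ.realize v w g = 0)
    (u t : FreeMonoid X) (c d : R) (v w : V) :
    ρ.L v w (MonoidAlgebra.single u c * g * MonoidAlgebra.single t d) = 0 := by
  have hprod : MonoidAlgebra.single u c * g * MonoidAlgebra.single t d
      = Finsupp.sum g.coeff fun m r => MonoidAlgebra.single (u * m * t) (c * r * d) := by
    conv_lhs => rw [← MonoidAlgebra.sum_coeff_single g]
    rw [Finsupp.mul_sum, Finsupp.sum_mul]
    refine Finsupp.sum_congr fun m _ => ?_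
    rw [MonoidAlgebra.single_mul_single, MonoidAlgebra.single_mul_single]
  rw [hprod, map_finsuppSum]
  have hL : ∀ m ∈ g.coeff.support, ρ.L v w (MonoidAlgebra.single (u * m * t) (c * (g.coeff m) * d))
      = (c * (g.coeff m) * d) • ρ.psi v w (u * m * t) := fun m _ => ρ.L_single v w _ _
  by_cases hex : ∃ m ∈ g.coeff.support, ∃ p : LQPath Q v w,
      p.label = u * m * t
  · obtain ⟨m₀, hm₀, p, hp⟩ := hex
    -- split the path p according to the factorization  u * (m₀ * t)
    obtain ⟨v₂, q, r, hq, hr⟩ := p.split u (m₀ * t) (by rw [hp, mul_assoc])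
    obtain ⟨v₁, pt, qm, hpt, hqm⟩ := q.split m₀ t hq
    have hsig : ∀ m ∈ g.coeff.support, (v₁, v₂) ∈ Q.sigmaM m := by
      intro m hm
      have : Q.sigmaM m = Q.sigmaM (m₀ : FreeMonoid X) := hg.2 m hm m₀ hm₀
      rw [this]
      exact ⟨qm, hqm⟩
    have hzg : ρ.realize v₁ v₂ g = 0 := by
      refine hz v₁ v₂ ?_
      simp only [LabelledQuiver.sigmaP, Set.mem_iInter]
      exact fun m hm => hsig m hm
    have hpsi : ∀ m ∈ g.coeff.support,
        ρ.psi v w (u * m * t) = ρ.pathMap pt ≫ ρ.psi v₁ v₂ m ≫ ρ.pathMap r := by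
      intro m hm
      obtain ⟨pm, hpm⟩ := hsig m hm
      have hlab : ((pt.comp pm).comp r).label = u * m * t := by
        rw [LQPath.label_comp, LQPath.label_comp, hr, hpm, hpt, mul_assoc]
      rw [ρ.psi_eq_pathMap hρ _ hlab, ρ.pathMap_comp, ρ.pathMap_comp,
        ρ.psi_eq_pathMap hρ pm hpm, Category.assoc]
    rw [Finsupp.sum]
    have hmain : ∀ m ∈ g.coeff.support,
        ρ.L v w (MonoidAlgebra.single (u * m * t) (c * (g.coeff m) * d))
          = ρ.pathMap pt ≫ (((c * d) * g.coeff m) • ρ.psi v₁ v₂ m) ≫ ρ.pathMap r := by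
      intro m hm
      rw [hL m hm, hpsi m hm]
      simp only [Linear.comp_smul, Linear.smul_comp, smul_smul]
      congr 1
      ring
    rw [Finset.sum_congr rfl hmain]
    have hfin : ∑ m ∈ g.coeff.support,
        ρ.pathMap pt ≫ (((c * d) * g.coeff m) • ρ.psi v₁ v₂ m) ≫ ρ.pathMap r
          = ρ.pathMap pt ≫ ((c * d) • ρ.realize v₁ v₂ g) ≫ ρ.pathMap r := by
      rw [realize_eq_sum, Finsupp.sum]
      simp only [Preadditive.comp_sum, Preadditive.sum_comp, Linear.comp_smul,
        Linear.smul_comp, Finset.smul_sum, smul_smul]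
    rw [hfin, hzg, smul_zero, Limits.zero_comp, Limits.comp_zero]
  · push_neg at hex
    rw [Finsupp.sum]
    refine Finset.sum_eq_zero fun m hm => ?_
    rw [hL m hm, ρ.psi_eq_zero (by exact fun ⟨p, hp⟩ => hex m hm p hp), smul_zero]

theorem L_mul (ρ : CatQuiverRep R Q C) (hρ : ρ.Consistent)
    (g : FreeAlg R X) (hg : Q.UniformlyCompatible g)
    (hz : ∀ v w : V, (v, w) ∈ Q.sigmaP g → ρ.realize v w g = 0)
    (a b : FreeAlg R X) (v w : V) : ρ.L v w (a * g * b) = 0 := by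
  have hbcase : ∀ (u : FreeMonoid X) (c : R) (b : FreeAlg R X),
      ρ.L v w (MonoidAlgebra.single u c * g * b) = 0 := by
    intro u c b
    induction b using MonoidAlgebra.induction with
    | zero => simp
    | single_add t d b' _ _ ih =>
      rw [mul_add, map_add, ih, add_zero,
        ρ.L_single_mul_single hρ g hg hz u t c d v w]
  induction a using MonoidAlgebra.induction with
  | zero => simp
  | single_add u c a' _ _ ih =>
    rw [add_mul, add_mul, map_add, ih, add_zero, hbcase u c b]

end CatQuiverRep

end Aux

/-- Let `f` lie in the two-sided ideal generated by `F ⊆ R⟨X⟩`, let `Q` be a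
labelled quiver such that `f` is compatible and all elements of `F` are uniformly compatible
with `Q`. Then for every `R`-linear category `C` and every consistent representation of `Q` in
`C` such that every realization of every element of `F` is zero, every realization of `f` is
zero: `φ_{v,w}(f) = 0` in `Hom_C(𝒱_v, 𝒱_w)` for all `(v, w) ∈ σ(f)`. -/
theorem main_theorem_Rlinear {R X : Type*} [CommRing R] (F : Set (FreeAlg R X))
    (f : FreeAlg R X) (hf : MemIdeal F f) {V E : Type*} (Q : LabelledQuiver V E X)
    (hcf : Q.Compatible f) (hF : ∀ g ∈ F, Q.UniformlyCompatible g)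
    {C : Type*} [Category C] [Preadditive C] [CategoryTheory.Linear R C]
    (ρ : CatQuiverRep R Q C) (hρ : ρ.Consistent)
    (hzero : ∀ g ∈ F, ∀ v w : V, (v, w) ∈ Q.sigmaP g → ρ.realize v w g = 0) :
    ∀ v w : V, (v, w) ∈ Q.sigmaP f → ρ.realize v w f = 0 := by
  intro v w _
  obtain ⟨n, a, b, g, hgF, rfl⟩ := hf
  rw [CatQuiverRep.realize_eq_L, map_sum]
  refine Finset.sum_eq_zero fun i _ => ?_
  exact ρ.L_mul hρ (g i) (hF (g i) (hgF i)) (hzero (g i) (hgF i)) (a i) (b i) v w
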